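/- Let X = [0,1]^d, (u^n)_{n≥0} a (t,d)-sequence in base b ≥ 2, and K : X → P(X) a Markov kernel satisfying Assumptions A1 and A2; assume additionally that F_K, viewed as a function of (x,y) ∈ X², is Lipschitz with Lipschitz constant C_K for the supremum norm. Set K̃ = min_{i∈1:d} inf_{(x,y)∈X²} K_i(y_i | y_{1:i−1}, x) and C̃_K = 0.5 K̃ (1 ∧ (0.25 K̃ / C_K)^d). Then the conclusion of Lemma 1 (on the existence of δ̄_K, k_δ and v_K such that every block {F_K^{-1}(x^n, u^n) : a b^{k_δ} ≤ n < (a+1) b^{k_δ}} with x^n ∈ B_{v_K(δ)}(x̃) contains at least b^t points in B_δ(x')) holds with the explicit choices k_δ = ⌈t + d − d·log(δ C̃_K / 3)/log b⌉, δ̄_K = (3/C̃_K) ∧ 0.5, and v_K(δ) = δ·(1 ∧ (0.25 K̃ / C_K)^d). -/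

import Mathlib

open MeasureTheory ProbabilityTheory Set Filter
open scoped Classical

/-- The closed unit cube `[0,1]^d` in `ℝ^d` (modeled as `Fin d → ℝ` with the sup norm). -/
def cube (d : ℕ) : Set (Fin d → ℝ) := {x | ∀ i, x i ∈ Set.Icc (0:ℝ) 1}

/-- Membership in the `b`-ary box `∏_j [c_j b^{-e_j}, (c_j+1) b^{-e_j})`. -/
def inBaryBox {d : ℕ} (b : ℕ) (e c : Fin d → ℕ) (x : Fin d → ℝ) : Prop :=
  ∀ j, (c j : ℝ) / (b : ℝ) ^ (e j) ≤ x j ∧ x j < ((c j : ℝ) + 1) / (b : ℝ) ^ (e j)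

/-- The block `{u^n : A ≤ n < A + b^m}` is a `(t,m,d)`-net in base `b`: every `b`-ary box of
volume `b^{t-m}` contains exactly `b^t` points of the block. -/
def IsNetBlock {d : ℕ} (b t m : ℕ) (u : ℕ → Fin d → ℝ) (A : ℕ) : Prop :=
  ∀ e c : Fin d → ℕ, (∀ j, c j < b ^ (e j)) → (∑ j, e j) = m - t →
    ((Finset.Ico A (A + b ^ m)).filter (fun n => inBaryBox b e c (u n))).card = b ^ t

/-- `(u^n)_{n≥0}` is a `(t,d)`-sequence in base `b`. -/
def IsTSeq {d : ℕ} (b t : ℕ) (u : ℕ → Fin d → ℝ) : Prop :=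
  (∀ n i, u n i ∈ Set.Ico (0:ℝ) 1) ∧
  ∀ a m : ℕ, t ≤ m → IsNetBlock b t m u (a * b ^ m)

/-- `(v^n)_{n≥0}` is a scalar `(t,1)`-sequence in base `b`. -/
def IsTSeq1 (b t : ℕ) (v : ℕ → ℝ) : Prop :=
  (∀ n, v n ∈ Set.Ico (0:ℝ) 1) ∧
  ∀ a m : ℕ, t ≤ m → ∀ c : ℕ, c < b ^ (m - t) →
    ((Finset.Ico (a * b ^ m) (a * b ^ m + b ^ m)).filter
      (fun n => (c : ℝ) / (b:ℝ) ^ (m - t) ≤ v n ∧ v n < ((c : ℝ) + 1) / (b:ℝ) ^ (m - t))).card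
      = b ^ t

/-- `k_n`: the smallest integer `k` such that `n < b^k`. -/
noncomputable def kOf (b n : ℕ) : ℕ := sInf {k | n < b ^ k}

section Rosenblatt

variable {d : ℕ}

/-- Marginal of the density `κ(·|x)` over the first `i` coordinates: the first `i` coordinates
are fixed to those of `y`, the remaining ones are integrated out over the unit cube. -/
noncomputable def marg (κ : (Fin d → ℝ) → (Fin d → ℝ) → ℝ) (i : ℕ) (x y : Fin d → ℝ) : ℝ :=
  ∫ z in cube d, κ x (fun j => if (j : ℕ) < i then y j else z j)

/-- `K_i(y_i | y_{1:i-1}, x)`: the `i`-th conditional density of the kernel density `κ`. -/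
noncomputable def condDensity (κ : (Fin d → ℝ) → (Fin d → ℝ) → ℝ) (i : Fin d)
    (x y : Fin d → ℝ) : ℝ :=
  marg κ ((i : ℕ) + 1) x y / marg κ (i : ℕ) x y

/-- `F_{K_i}(s | x, y_{1:i-1})`: the `i`-th conditional CDF of the kernel density `κ`. -/
noncomputable def condCDF' (κ : (Fin d → ℝ) → (Fin d → ℝ) → ℝ) (i : Fin d)
    (x y : Fin d → ℝ) (s : ℝ) : ℝ :=
  ∫ r in (0:ℝ)..s, condDensity κ i x (Function.update y i r)

/-- The Rosenblatt transform `F_K(x,·)` of the kernel with density `κ`. -/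
noncomputable def Ros (κ : (Fin d → ℝ) → (Fin d → ℝ) → ℝ) (x y : Fin d → ℝ) : Fin d → ℝ :=
  fun i => condCDF' κ i x y (y i)

/-- Assumption (A1): each conditional CDF is strictly increasing in its main argument. -/
def A1 (κ : (Fin d → ℝ) → (Fin d → ℝ) → ℝ) : Prop :=
  ∀ x ∈ cube d, ∀ y ∈ cube d, ∀ i : Fin d,
    StrictMonoOn (fun s => condCDF' κ i x y s) (Set.Icc (0:ℝ) 1)

/-- Assumption (A2): the density `κ` is continuous on `X²` and bounded below by `Klow > 0`. -/
def A2 (κ : (Fin d → ℝ) → (Fin d → ℝ) → ℝ) (Klow : ℝ) : Prop :=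
  ContinuousOn (fun p : (Fin d → ℝ) × (Fin d → ℝ) => κ p.1 p.2) ((cube d) ×ˢ (cube d)) ∧
  0 < Klow ∧ ∀ x ∈ cube d, ∀ y ∈ cube d, Klow ≤ κ x y

/-- `κ` is a probability density in its second argument, w.r.t. Lebesgue measure on the cube. -/
def IsMarkovDensity (κ : (Fin d → ℝ) → (Fin d → ℝ) → ℝ) : Prop :=
  ∀ x ∈ cube d, (∀ y ∈ cube d, 0 ≤ κ x y) ∧ ∫ y in cube d, κ x y = 1

/-- `G` is the inverse Rosenblatt transform associated with `κ`. -/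
def IsInvRos (κ : (Fin d → ℝ) → (Fin d → ℝ) → ℝ)
    (G : (Fin d → ℝ) → (Fin d → ℝ) → (Fin d → ℝ)) : Prop :=
  ∀ x ∈ cube d, ∀ u : Fin d → ℝ, (∀ i, u i ∈ Set.Icc (0:ℝ) 1) →
    G x u ∈ cube d ∧ Ros κ x (G x u) = u

/-- The sup-norm ball `B_δ(x)` of radius `δ` around `x`, intersected with the cube. -/
def ball' {d : ℕ} (δ : ℝ) (x : Fin d → ℝ) : Set (Fin d → ℝ) :=
  {y ∈ cube d | ‖y - x‖ ≤ δ}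

end Rosenblatt

/-- `K̃ = min_{i} inf_{(x,y) ∈ X²} K_i(y_i | y_{1:i-1}, x)`. -/
noncomputable def Ktilde {d : ℕ} (κ : (Fin d → ℝ) → (Fin d → ℝ) → ℝ) : ℝ :=
  sInf {r | ∃ (i : Fin d) (x y : Fin d → ℝ),
    x ∈ cube d ∧ y ∈ cube d ∧ condDensity κ i x y = r}

/-- `C̃_K = 0.5 K̃ (1 ∧ (0.25 K̃ / C_K)^d)`. -/
noncomputable def Ctilde (d : ℕ) (Kt CK : ℝ) : ℝ :=
  0.5 * Kt * min 1 ((0.25 * Kt / CK) ^ d)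

/-- `k_δ = ⌈t + d - d log(δ C̃_K / 3) / log b⌉`. -/
noncomputable def kExplicit (b t d : ℕ) (Ct δ : ℝ) : ℕ :=
  (⌈(t : ℝ) + d - d * Real.log (δ * Ct / 3) / Real.log b⌉).toNat


/- ==================== Auxiliary lemmas ==================== -/

section AuxCube

lemma cube_eq_pi (d : ℕ) : cube d = Set.pi Set.univ (fun _ : Fin d => Set.Icc (0:ℝ) 1) := by
  ext x; simp [cube, Set.mem_pi, Pi.le_def, forall_and]

lemma measurableSet_cube (d : ℕ) : MeasurableSet (cube d) := by
  rw [cube_eq_pi]; exact MeasurableSet.univ_pi fun _ => measurableSet_Icc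

lemma isCompact_cube (d : ℕ) : IsCompact (cube d) := by
  rw [cube_eq_pi]; exact isCompact_univ_pi fun _ => isCompact_Icc

lemma volume_cube (d : ℕ) : volume (cube d) = 1 := by
  rw [cube_eq_pi, volume_pi_pi]; simp [Real.volume_Icc]

lemma update_mem_cube {d : ℕ} {y : Fin d → ℝ} (hy : y ∈ cube d) (i : Fin d) {r : ℝ}
    (hr : r ∈ Set.Icc (0:ℝ) 1) : Function.update y i r ∈ cube d := by
  intro j
  rcases eq_or_ne j i with rfl | h
  · simpa using hr
  · simpa [Function.update_of_ne h] using hy j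

lemma mix_mem_cube {d : ℕ} {y z : Fin d → ℝ} (hy : y ∈ cube d) (hz : z ∈ cube d) (m : ℕ) :
    (fun j : Fin d => if (j : ℕ) < m then y j else z j) ∈ cube d := by
  intro j; dsimp only; split
  · exact hy j
  · exact hz j

end AuxCube

section Fstar

variable {n : ℕ}

lemma insertNth_mem_cube {i : Fin (n+1)} {r : ℝ} {w : Fin n → ℝ}
    (hr : r ∈ Set.Icc (0:ℝ) 1) (hw : ∀ j, w j ∈ Set.Icc (0:ℝ) 1) :
    i.insertNth r w ∈ cube (n+1) := by
  intro l
  rcases eq_or_ne l i with rfl | h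
  · simpa using hr
  · obtain ⟨j, rfl⟩ := Fin.exists_succAbove_eq h
    simpa using hw j

lemma update_insertNth (i : Fin (n+1)) (r r' : ℝ) (w : Fin n → ℝ) :
    Function.update (Fin.insertNth (α := fun _ => ℝ) i r' w) i r
      = Fin.insertNth (α := fun _ => ℝ) i r w := by
  funext l
  rcases eq_or_ne l i with rfl | h
  · simp
  · obtain ⟨j, rfl⟩ := Fin.exists_succAbove_eq h
    simp [Function.update_of_ne (Fin.succAbove_ne i j)]

/-- Key disintegration step: integrating a continuous function over the cube equals the
iterated integral over coordinate `i` and the remaining coordinates. -/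
lemma setIntegral_cube_succAbove (i : Fin (n+1)) (R : (Fin (n+1) → ℝ) → ℝ)
    (hR : ContinuousOn R (cube (n+1))) :
    ∫ z in cube (n+1), R z
      = ∫ r in Set.Icc (0:ℝ) 1,
          ∫ w in Set.pi Set.univ (fun _ : Fin n => Set.Icc (0:ℝ) 1), R (i.insertNth r w) := by
  set C' : Set (Fin n → ℝ) := Set.pi Set.univ (fun _ : Fin n => Set.Icc (0:ℝ) 1) with hC'def
  set e := MeasurableEquiv.piFinSuccAbove (fun _ : Fin (n+1) => ℝ) i with he
  have MP : MeasurePreserving e volume volume :=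
    volume_preserving_piFinSuccAbove (fun _ : Fin (n+1) => ℝ) i
  have hpre : e ⁻¹' ((Set.Icc (0:ℝ) 1) ×ˢ C') = cube (n+1) := by
    ext z
    have hez : e z = (z i, fun j => z (i.succAbove j)) := rfl
    simp only [Set.mem_preimage, hez, Set.mem_prod, hC'def, Set.mem_pi, Set.mem_univ,
      forall_true_left, cube, Set.mem_setOf_eq]
    rw [Fin.forall_iff_succAbove i]
  have hsymm : ∀ p : ℝ × (Fin n → ℝ), e.symm p = i.insertNth p.1 p.2 := fun p => rfl
  have step1 : ∫ z in cube (n+1), R z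
      = ∫ p in (Set.Icc (0:ℝ) 1) ×ˢ C', R (e.symm p) := by
    rw [← hpre]
    have := MP.setIntegral_preimage_emb e.measurableEmbedding (fun p => R (e.symm p))
      ((Set.Icc (0:ℝ) 1) ×ˢ C')
    simpa using this
  rw [step1]
  have hcontins : Continuous (fun p : ℝ × (Fin n → ℝ) => i.insertNth (α := fun _ => ℝ) p.1 p.2) :=
    Continuous.finInsertNth (A := fun _ : Fin (n+1) => ℝ) i continuous_fst continuous_snd
  have hmaps : Set.MapsTo (fun p : ℝ × (Fin n → ℝ) => i.insertNth p.1 p.2)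
      ((Set.Icc (0:ℝ) 1) ×ˢ C') (cube (n+1)) := by
    rintro ⟨r, w⟩ ⟨hr, hw⟩
    exact insertNth_mem_cube hr (by intro j; exact hw j (Set.mem_univ j))
  have hint : IntegrableOn (fun p : ℝ × (Fin n → ℝ) => R (i.insertNth p.1 p.2))
      ((Set.Icc (0:ℝ) 1) ×ˢ C') volume := by
    apply ContinuousOn.integrableOn_compact
    · exact isCompact_Icc.prod (isCompact_univ_pi fun _ => isCompact_Icc)
    · exact hR.comp hcontins.continuousOn hmaps
  have hfun : (fun p : ℝ × (Fin n → ℝ) => R (e.symm p))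
      = fun p : ℝ × (Fin n → ℝ) => R (i.insertNth p.1 p.2) := by
    funext p; rw [hsymm]
  rw [hfun]
  rw [show (volume : Measure (ℝ × (Fin n → ℝ))) = (volume : Measure ℝ).prod volume from
    Measure.volume_eq_prod ℝ (Fin n → ℝ)] at hint ⊢
  exact setIntegral_prod _ hint

lemma integral_update_eq {d : ℕ} (i : Fin d) (Q : (Fin d → ℝ) → ℝ)
    (hQ : ContinuousOn Q (cube d)) :
    (∫ r in (0:ℝ)..1, ∫ z in cube d, Q (Function.update z i r)) = ∫ z in cube d, Q z := by
  rcases d with _ | n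
  · exact i.elim0
  set C' : Set (Fin n → ℝ) := Set.pi Set.univ (fun _ : Fin n => Set.Icc (0:ℝ) 1) with hC'def
  set g : ℝ → ℝ := fun r => ∫ w in C', Q (i.insertNth r w) with hg
  have hinner : Set.EqOn (fun r => ∫ z in cube (n+1), Q (Function.update z i r)) g
      (Set.uIcc (0:ℝ) 1) := by
    intro r hr
    rw [Set.uIcc_of_le zero_le_one] at hr
    have hQr : ContinuousOn (fun z => Q (Function.update z i r)) (cube (n+1)) := by
      apply hQ.comp (Continuous.continuousOn ?_) ?_
      · exact continuous_id.update i continuous_const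
      · intro z hz; exact update_mem_cube hz i hr
    have := setIntegral_cube_succAbove i _ hQr
    dsimp only
    rw [this]
    have : ∀ r' ∈ Set.Icc (0:ℝ) 1,
        (∫ w in C', Q (Function.update (i.insertNth r' w) i r)) = g r := by
      intro r' _
      simp_rw [update_insertNth]
      rfl
    rw [setIntegral_congr_fun measurableSet_Icc this]
    simp [Real.volume_Icc]
  rw [intervalIntegral.integral_congr hinner, intervalIntegral.integral_of_le zero_le_one,
    ← integral_Icc_eq_integral_Ioc]
  exact (setIntegral_cube_succAbove i Q hQ).symm

end Fstar

section Marg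

variable {d : ℕ} {κ : (Fin d → ℝ) → (Fin d → ℝ) → ℝ} {Klow : ℝ}

lemma marg_congr {x y y' : Fin d → ℝ} (m : ℕ) (h : ∀ j : Fin d, (j : ℕ) < m → y j = y' j) :
    marg κ m x y = marg κ m x y' := by
  unfold marg
  congr 1
  funext z
  congr 1
  funext j
  by_cases hj : (j : ℕ) < m
  · simp [hj, h j hj]
  · simp [hj]

lemma condCDF'_congr {x y y' : Fin d → ℝ} (i : Fin d)
    (h : ∀ j : Fin d, (j : ℕ) < (i : ℕ) → y j = y' j) (s : ℝ) :
    condCDF' κ i x y s = condCDF' κ i x y' s := by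
  unfold condCDF'
  have : ∀ r : ℝ, condDensity κ i x (Function.update y i r)
      = condDensity κ i x (Function.update y' i r) := by
    intro r
    unfold condDensity
    have h1 : marg κ ((i : ℕ) + 1) x (Function.update y i r)
        = marg κ ((i : ℕ) + 1) x (Function.update y' i r) := by
      apply marg_congr
      intro j hj
      rcases eq_or_ne j i with rfl | hne
      · simp
      · have : (j : ℕ) < (i : ℕ) := by
          rcases lt_or_eq_of_le (Nat.lt_succ_iff.mp hj) with h' | h'
          · exact h'
          · exact absurd (Fin.ext h') hne
        simp [Function.update_of_ne hne, h j this]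
    have h2 : marg κ (i : ℕ) x (Function.update y i r)
        = marg κ (i : ℕ) x (Function.update y' i r) := by
      apply marg_congr
      intro j hj
      have hne : j ≠ i := by intro h'; subst h'; exact absurd hj (lt_irrefl _)
      simp [Function.update_of_ne hne, h j hj]
    rw [h1, h2]
  simp_rw [this]

lemma Ktilde_le_condDensity (hKt : 0 < Ktilde κ) {x y : Fin d → ℝ}
    (hx : x ∈ cube d) (hy : y ∈ cube d) (i : Fin d) :
    Ktilde κ ≤ condDensity κ i x y := by
  by_cases hbdd : BddBelow {r | ∃ (i : Fin d) (x y : Fin d → ℝ),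
      x ∈ cube d ∧ y ∈ cube d ∧ condDensity κ i x y = r}
  · exact csInf_le hbdd ⟨i, x, y, hx, hy, rfl⟩
  · rw [Ktilde, Real.sInf_of_not_bddBelow hbdd] at hKt
    exact absurd hKt (lt_irrefl 0)

lemma marg_nonneg (hA2 : A2 κ Klow) {x y : Fin d → ℝ} (hx : x ∈ cube d) (hy : y ∈ cube d)
    (m : ℕ) : 0 ≤ marg κ m x y :=
  setIntegral_nonneg (measurableSet_cube d)
    (fun z hz => le_trans hA2.2.1.le (hA2.2.2 x hx _ (mix_mem_cube hy hz m)))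

lemma Ktilde_nonneg (hA2 : A2 κ Klow) (hd : 0 < d) : 0 ≤ Ktilde κ := by
  apply Real.sInf_nonneg
  rintro r ⟨i, x, y, hx, hy, rfl⟩
  exact div_nonneg (marg_nonneg hA2 hx hy _) (marg_nonneg hA2 hx hy _)

lemma continuousOn_mix (hA2 : A2 κ Klow) {x y : Fin d → ℝ} (hx : x ∈ cube d)
    (hy : y ∈ cube d) (m : ℕ) :
    ContinuousOn (fun z => κ x (fun j : Fin d => if (j : ℕ) < m then y j else z j)) (cube d) := by
  have hmix : Continuous
      (fun z : Fin d → ℝ => (fun j : Fin d => if (j : ℕ) < m then y j else z j)) := by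
    apply continuous_pi
    intro j
    by_cases hj : (j : ℕ) < m
    · simpa [hj] using continuous_const
    · simpa [hj] using continuous_apply j
  have hkx : ContinuousOn (fun z : Fin d → ℝ => κ x z) (cube d) := by
    have : ContinuousOn (fun z : Fin d → ℝ => (x, z)) (cube d) :=
      (continuous_const.prodMk continuous_id).continuousOn
    exact hA2.1.comp this (fun z hz => ⟨hx, hz⟩)
  exact hkx.comp hmix.continuousOn (fun z hz => mix_mem_cube hy hz m)

lemma marg_ge (hA2 : A2 κ Klow) {x y : Fin d → ℝ} (hx : x ∈ cube d) (hy : y ∈ cube d) (m : ℕ) :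
    Klow ≤ marg κ m x y := by
  have h := setIntegral_ge_of_const_le (μ := volume) (c := Klow) (measurableSet_cube d)
    (by rw [volume_cube]; exact ENNReal.one_ne_top)
    (fun z hz => hA2.2.2 x hx _ (mix_mem_cube hy hz m))
    (((continuousOn_mix hA2 hx hy m)).integrableOn_compact (isCompact_cube d))
  rw [measureReal_def, volume_cube] at h
  simpa [marg] using h

lemma condCDF'_one (hA2 : A2 κ Klow) {x w : Fin d → ℝ} (hx : x ∈ cube d) (hw : w ∈ cube d)
    (i : Fin d) : condCDF' κ i x w 1 = 1 := by
  set D := marg κ (i : ℕ) x w with hD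
  have hDpos : 0 < D := lt_of_lt_of_le hA2.2.1 (marg_ge hA2 hx hw _)
  have hrep : ∀ r : ℝ, condDensity κ i x (Function.update w i r)
      = marg κ ((i : ℕ) + 1) x (Function.update w i r) / D := by
    intro r
    unfold condDensity
    congr 1
    rw [hD]
    apply marg_congr
    intro j hj
    have hne : j ≠ i := by intro h'; subst h'; exact absurd hj (lt_irrefl _)
    simp [Function.update_of_ne hne]
  have step : condCDF' κ i x w 1
      = (∫ r in (0:ℝ)..1, marg κ ((i : ℕ) + 1) x (Function.update w i r)) / D := by
    rw [condCDF']
    simp_rw [hrep]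
    exact intervalIntegral.integral_div D _
  set Q : (Fin d → ℝ) → ℝ :=
    fun z => κ x (fun j : Fin d => if (j : ℕ) < (i : ℕ) then w j else z j) with hQ
  have hmargrep : ∀ r : ℝ, marg κ ((i : ℕ) + 1) x (Function.update w i r)
      = ∫ z in cube d, Q (Function.update z i r) := by
    intro r
    rw [marg]
    congr 1
    funext z
    rw [hQ]
    congr 1
    funext j
    rcases eq_or_ne j i with rfl | hne
    · simp
    · by_cases hj : (j : ℕ) < (i : ℕ)
      · simp [Function.update_of_ne hne, hj, Nat.lt_succ_of_lt hj]
      · have hj' : ¬ ((j : ℕ) < (i : ℕ) + 1) := by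
          intro hcon
          rcases lt_or_eq_of_le (Nat.lt_succ_iff.mp hcon) with h' | h'
          · exact hj h'
          · exact hne (Fin.ext h')
        simp [Function.update_of_ne hne, hj, hj']
  have hF : (∫ r in (0:ℝ)..1, marg κ ((i : ℕ) + 1) x (Function.update w i r)) = D := by
    simp_rw [hmargrep]
    rw [integral_update_eq i Q (continuousOn_mix hA2 hx hw (i : ℕ))]
    rfl
  rw [step, hF, div_self hDpos.ne']

lemma condCDF'_zero (x w : Fin d → ℝ) (i : Fin d) : condCDF' κ i x w 0 = 0 :=
  intervalIntegral.integral_same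

lemma condCDF'_lower (hKt : 0 < Ktilde κ) (hA1 : A1 κ) {x w : Fin d → ℝ}
    (hx : x ∈ cube d) (hw : w ∈ cube d) (i : Fin d) {s s' : ℝ}
    (hs : s ∈ Set.Icc (0:ℝ) 1) (hs' : s' ∈ Set.Icc (0:ℝ) 1) (hle : s' ≤ s) :
    Ktilde κ * (s - s') ≤ condCDF' κ i x w s - condCDF' κ i x w s' := by
  set g : ℝ → ℝ := fun r => condDensity κ i x (Function.update w i r) with hg
  have hInt : IntervalIntegrable g volume 0 s := by
    by_contra hno
    have h0 : condCDF' κ i x w s = 0 := intervalIntegral.integral_undef hno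
    rcases eq_or_lt_of_le hs.1 with heq | hpos
    · exact hno (heq ▸ IntervalIntegrable.refl)
    · have hmono := (hA1 x hx w hw i) (show (0:ℝ) ∈ Set.Icc (0:ℝ) 1 by norm_num) hs hpos
      simp only at hmono
      rw [condCDF'_zero, h0] at hmono
      exact absurd hmono (lt_irrefl 0)
  have h2 : IntervalIntegrable g volume 0 s' := by
    apply hInt.mono_set
    rw [Set.uIcc_of_le hs'.1, Set.uIcc_of_le hs.1]
    exact Set.Icc_subset_Icc le_rfl hle
  have h3 : IntervalIntegrable g volume s' s := by
    apply hInt.mono_set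
    rw [Set.uIcc_of_le hle, Set.uIcc_of_le hs.1]
    exact Set.Icc_subset_Icc hs'.1 le_rfl
  have hsplit : condCDF' κ i x w s' + ∫ r in s'..s, g r = condCDF' κ i x w s :=
    intervalIntegral.integral_add_adjacent_intervals h2 h3
  have hlow : Ktilde κ * (s - s') ≤ ∫ r in s'..s, g r := by
    calc Ktilde κ * (s - s') = (s - s') • Ktilde κ := by rw [smul_eq_mul]; ring
    _ = ∫ _ in s'..s, Ktilde κ := (intervalIntegral.integral_const _).symm
    _ ≤ ∫ r in s'..s, g r := by
        apply intervalIntegral.integral_mono_on hle intervalIntegrable_const h3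
        intro r hr
        exact Ktilde_le_condDensity hKt hx
          (update_mem_cube hw i ⟨le_trans hs'.1 hr.1, le_trans hr.2 hs.2⟩) i
  linarith

lemma condCDF'_mem_Icc (hA1 : A1 κ) (hA2 : A2 κ Klow) {x w : Fin d → ℝ}
    (hx : x ∈ cube d) (hw : w ∈ cube d) (i : Fin d) {s : ℝ} (hs : s ∈ Set.Icc (0:ℝ) 1) :
    condCDF' κ i x w s ∈ Set.Icc (0:ℝ) 1 := by
  have hmono := (hA1 x hx w hw i).monotoneOn
  constructor
  · have := hmono (show (0:ℝ) ∈ Set.Icc (0:ℝ) 1 by norm_num) hs hs.1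
    simpa [condCDF'_zero] using this
  · have := hmono hs (show (1:ℝ) ∈ Set.Icc (0:ℝ) 1 by norm_num) hs.2
    simpa [condCDF'_one hA2 hx hw i] using this

end Marg

section Arith

lemma min_one_pow {a : ℝ} (ha : 0 ≤ a) {d : ℕ} (hd : 0 < d) :
    min 1 (a ^ d) = (min 1 a) ^ d := by
  rcases le_total a 1 with h | h
  · rw [min_eq_right h, min_eq_right (pow_le_one₀ ha h)]
  · rw [min_eq_left h, min_eq_left (one_le_pow₀ h), one_pow]

lemma kExplicit_facts {b t d : ℕ} (hb : 2 ≤ b) (hd : 0 < d) {Ct δ : ℝ} (hCt : 0 < Ct)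
    (hδ : 0 < δ) (hδCt : δ * Ct ≤ 3) :
    t + d ≤ kExplicit b t d Ct δ ∧
    ((b : ℝ) ^ ((kExplicit b t d Ct δ - t) / d))⁻¹ ≤ δ * Ct / 3 := by
  set A : ℝ := δ * Ct / 3 with hAdef
  have hA : 0 < A := by positivity
  have hA1 : A ≤ 1 := by rw [hAdef]; linarith
  have hb1 : (1:ℝ) < (b:ℝ) := by exact_mod_cast hb.trans_lt' one_lt_two
  have hlogb : 0 < Real.log b := Real.log_pos hb1
  have hlogA : Real.log A ≤ 0 := Real.log_nonpos hA.le hA1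
  set r : ℝ := (t : ℝ) + d - d * Real.log A / Real.log b with hrdef
  have hd0 : (0:ℝ) < d := by exact_mod_cast hd
  have hX : (d : ℝ) * Real.log A / Real.log b ≤ 0 := by
    apply div_nonpos_of_nonpos_of_nonneg _ hlogb.le
    nlinarith
  have hr : (t : ℝ) + d ≤ r := by rw [hrdef]; linarith
  have hceil : ((t + d : ℕ) : ℤ) ≤ ⌈r⌉ := by
    calc ((t + d : ℕ) : ℤ) = ⌈((t + d : ℕ) : ℝ)⌉ := (Int.ceil_natCast _).symm
    _ ≤ ⌈r⌉ := Int.ceil_mono (by push_cast; linarith)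
  set k : ℕ := kExplicit b t d Ct δ with hkdef
  have hkeq : k = (⌈r⌉).toNat := rfl
  have hk_nat : t + d ≤ k := by
    have h6 := Int.toNat_le_toNat hceil
    rw [Int.toNat_natCast] at h6
    rw [hkeq]; exact h6
  have h0 : (0:ℤ) ≤ ⌈r⌉ := le_trans (by positivity) hceil
  have hkr : r ≤ (k : ℝ) := by
    have : ((k : ℕ) : ℝ) = ((⌈r⌉ : ℤ) : ℝ) := by
      rw [hkeq]
      have h7 := Int.toNat_of_nonneg h0
      exact_mod_cast h7
    rw [this]
    exact Int.le_ceil r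
  refine ⟨hk_nat, ?_⟩
  have hkt : t ≤ k := le_trans (Nat.le_add_right t d) hk_nat
  have hdiv : k - t < d * ((k - t) / d) + d := by
    have h1 : d * ((k - t) / d) + (k - t) % d = k - t := Nat.div_add_mod _ _
    have h2 : (k - t) % d < d := Nat.mod_lt _ hd
    omega
  set q0 : ℕ := (k - t) / d with hq0def
  have hMcast : ((k - t : ℕ) : ℝ) = (k : ℝ) - t := by
    push_cast [Nat.cast_sub hkt]; ring
  have hdivR : (k : ℝ) - t < (d : ℝ) * q0 + d := by
    rw [← hMcast]; exact_mod_cast hdiv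
  have hlow : (k : ℝ) - t - d ≥ -((d:ℝ) * Real.log A / Real.log b) := by
    rw [hrdef] at hkr; linarith
  have hstep : (d:ℝ) * ((-Real.log A) / Real.log b) < (d:ℝ) * q0 := by
    have h7 : (d:ℝ) * ((-Real.log A) / Real.log b) = -((d:ℝ) * Real.log A / Real.log b) := by
      ring
    rw [h7]; linarith
  have h8 : (-Real.log A) / Real.log b < (q0:ℝ) := lt_of_mul_lt_mul_left hstep hd0.le
  have hq0R : -Real.log A < (q0 : ℝ) * Real.log b := by
    rw [div_lt_iff₀ hlogb] at h8; linarith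
  have hpow : A⁻¹ < (b:ℝ) ^ q0 := by
    have hbq : (0:ℝ) < (b:ℝ) ^ q0 := by positivity
    rw [← Real.log_lt_log_iff (by positivity) hbq, Real.log_inv, Real.log_pow]
    exact hq0R
  have : ((b:ℝ) ^ q0)⁻¹ < A := by
    have h5 : (0:ℝ) < A⁻¹ := by positivity
    calc ((b:ℝ) ^ q0)⁻¹ < (A⁻¹)⁻¹ := by
          apply inv_strictAnti₀ h5 hpow
    _ = A := inv_inv A
  exact this.le

lemma exists_exps (d : ℕ) (hd : 0 < d) (M : ℕ) (hM : d ≤ M) :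
    ∃ e : Fin d → ℕ, (∑ j, e j) = M ∧ ∀ j, M / d ≤ e j := by
  set q := M / d with hq
  have h1 : d * q ≤ M := by rw [hq]; exact Nat.mul_div_le M d
  set j0 : Fin d := ⟨0, hd⟩ with hj0
  refine ⟨fun j => q + if j = j0 then M - d * q else 0, ?_, ?_⟩
  · rw [Finset.sum_add_distrib, Finset.sum_const, Finset.sum_ite_eq' Finset.univ j0
      (fun _ => M - d * q)]
    simp only [Finset.mem_univ, if_true, Finset.card_univ, Fintype.card_fin, smul_eq_mul]
    omega
  · intro j
    exact Nat.le_add_right q _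

lemma box_coord {b : ℕ} (hb : 2 ≤ b) (e : ℕ) {v : ℝ} (hv : v ∈ Set.Icc (0:ℝ) 1) :
    min (Nat.floor (v * (b:ℝ)^e)) (b^e - 1) < b^e ∧
    ((min (Nat.floor (v * (b:ℝ)^e)) (b^e - 1) : ℕ) : ℝ) / (b:ℝ)^e ≤ v ∧
    v ≤ (((min (Nat.floor (v * (b:ℝ)^e)) (b^e - 1) : ℕ) : ℝ) + 1) / (b:ℝ)^e := by
  have hbe : 1 ≤ b ^ e := Nat.one_le_pow _ _ (by omega)
  have hP : (0:ℝ) < (b:ℝ)^e := by positivity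
  have hPc : ((b^e : ℕ) : ℝ) = (b:ℝ)^e := by push_cast; ring
  set c : ℕ := min (Nat.floor (v * (b:ℝ)^e)) (b^e - 1) with hc
  refine ⟨by omega, ?_, ?_⟩ <;> rcases lt_or_ge (v * (b:ℝ)^e) ((b:ℝ)^e) with h | h
  · have hfl : Nat.floor (v * (b:ℝ)^e) < b^e := by
      rw [Nat.floor_lt (mul_nonneg hv.1 hP.le)]
      rw [hPc]; exact h
    have hceq : c = Nat.floor (v * (b:ℝ)^e) := min_eq_left (by omega)
    rw [hceq, div_le_iff₀ hP]
    exact Nat.floor_le (mul_nonneg hv.1 hP.le)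
  · have hv1 : v = 1 := le_antisymm hv.2 (by nlinarith [hv.1])
    have hfl : Nat.floor (v * (b:ℝ)^e) = b^e := by
      rw [hv1, one_mul, ← hPc, Nat.floor_natCast]
    have hceq : c = b^e - 1 := by rw [hc, hfl]; omega
    rw [hceq, hv1, div_le_one hP]
    push_cast [Nat.cast_sub hbe, hPc]
    linarith
  · have hfl : Nat.floor (v * (b:ℝ)^e) < b^e := by
      rw [Nat.floor_lt (mul_nonneg hv.1 hP.le)]
      rw [hPc]; exact h
    have hceq : c = Nat.floor (v * (b:ℝ)^e) := min_eq_left (by omega)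
    rw [hceq, le_div_iff₀ hP]
    linarith [Nat.lt_floor_add_one (v * (b:ℝ)^e)]
  · have hv1 : v = 1 := le_antisymm hv.2 (by nlinarith [hv.1])
    have hfl : Nat.floor (v * (b:ℝ)^e) = b^e := by
      rw [hv1, one_mul, ← hPc, Nat.floor_natCast]
    have hceq : c = b^e - 1 := by rw [hc, hfl]; omega
    rw [hceq, hv1, le_div_iff₀ hP]
    push_cast [Nat.cast_sub hbe]
    linarith

end Arith

set_option maxHeartbeats 1600000 in
/-- **Lemma 2.** If moreover `F_K` is Lipschitz on `X²` with constant `C_K` (sup norm), then the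
conclusion of Lemma 1 holds with the explicit choices `k_δ = ⌈t + d - d log(δ C̃_K/3)/log b⌉`,
`δ̄_K = (3/C̃_K) ∧ 0.5` and `v_K(δ) = δ (1 ∧ (0.25 K̃/C_K)^d)`. -/
theorem invRos_block_hits_ball_explicit
    {d b t : ℕ} (hd : 0 < d) (hb : 2 ≤ b)
    (u : ℕ → Fin d → ℝ) (hu : IsTSeq b t u)
    (κ : (Fin d → ℝ) → (Fin d → ℝ) → ℝ) (hκ : IsMarkovDensity κ)
    (hA1 : A1 κ) (Klow : ℝ) (hA2 : A2 κ Klow)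
    (G : (Fin d → ℝ) → (Fin d → ℝ) → (Fin d → ℝ)) (hG : IsInvRos κ G)
    (CK : ℝ) (hCK : 0 < CK)
    (hLip : ∀ x ∈ cube d, ∀ y ∈ cube d, ∀ x' ∈ cube d, ∀ y' ∈ cube d,
      ‖Ros κ x y - Ros κ x' y'‖ ≤ CK * max ‖x - x'‖ ‖y - y'‖) :
    ∀ δ ∈ Set.Ioc (0:ℝ) (min (3 / Ctilde d (Ktilde κ) CK) 0.5),
      ∀ xt ∈ cube d, ∀ x' ∈ cube d, ∀ a : ℕ, ∀ xs : ℕ → Fin d → ℝ,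
        (∀ n ∈ Finset.Ico (a * b ^ kExplicit b t d (Ctilde d (Ktilde κ) CK) δ)
            (a * b ^ kExplicit b t d (Ctilde d (Ktilde κ) CK) δ
              + b ^ kExplicit b t d (Ctilde d (Ktilde κ) CK) δ),
          xs n ∈ ball' (δ * min 1 ((0.25 * Ktilde κ / CK) ^ d)) xt) →
        b ^ t ≤ ((Finset.Ico (a * b ^ kExplicit b t d (Ctilde d (Ktilde κ) CK) δ)
            (a * b ^ kExplicit b t d (Ctilde d (Ktilde κ) CK) δ
              + b ^ kExplicit b t d (Ctilde d (Ktilde κ) CK) δ)).filter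
          (fun n => G (xs n) (u n) ∈ ball' δ x')).card := by
  intro δ hδ xt hxt x' hx' a xs hxs
  obtain ⟨hδ0, hδle⟩ := hδ
  set Kt := Ktilde κ with hKtdef
  set Ct := Ctilde d Kt CK with hCtdef
  set k := kExplicit b t d Ct δ with hkdef
  -- Non-vacuity: `Ct > 0`, hence `Kt > 0`
  have hKt0 : 0 ≤ Kt := Ktilde_nonneg hA2 hd
  have hCt_pos : 0 < Ct := by
    by_contra hneg
    push_neg at hneg
    have h30 : 3 / Ct ≤ 0 := by
      rcases eq_or_lt_of_le hneg with h | h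
      · rw [h]; norm_num
      · exact (div_nonpos_iff.mpr (Or.inl ⟨by norm_num, h.le⟩))
    have : δ ≤ 0 := le_trans hδle (le_trans (min_le_left _ _) h30)
    linarith
  have hKt_pos : 0 < Kt := by
    rcases eq_or_lt_of_le hKt0 with h | h
    · exfalso
      have : Ct = 0 := by rw [hCtdef, Ctilde, ← h]; ring
      rw [this] at hCt_pos; exact absurd hCt_pos (lt_irrefl 0)
    · exact h
  -- θ and its properties
  set θ : ℝ := min 1 (0.25 * Kt / CK) with hθdef
  have hθ0 : 0 < θ := lt_min one_pos (by positivity)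
  have hθ1 : θ ≤ 1 := min_le_left _ _
  have hmθ : min 1 ((0.25 * Kt / CK) ^ d) = θ ^ d := min_one_pow (by positivity) hd
  have hθCK : CK * θ ≤ Kt / 4 := by
    have h1 : θ ≤ 0.25 * Kt / CK := min_le_right _ _
    have h2 : CK * θ ≤ CK * (0.25 * Kt / CK) := mul_le_mul_of_nonneg_left h1 hCK.le
    have h3 : CK * (0.25 * Kt / CK) = 0.25 * Kt := by field_simp
    rw [h3] at h2; linarith
  have hCt_val : Ct = 0.5 * Kt * θ ^ d := by rw [hCtdef, Ctilde, hmθ]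
  -- explicit exponent facts
  have hδCt3 : δ * Ct ≤ 3 := by
    have h := le_trans hδle (min_le_left _ _)
    rw [le_div_iff₀ hCt_pos] at h
    linarith
  obtain ⟨hk_ge, hq0_le⟩ := kExplicit_facts (t := t) hb hd hCt_pos hδ0 hδCt3
  have htk : t ≤ k := by omega
  obtain ⟨e, hesum, heq0⟩ := exists_exps d hd (k - t) (by omega)
  -- the target point u* and the box
  set ustar : Fin d → ℝ := Ros κ xt x' with hustar
  have hustar_mem : ∀ j, ustar j ∈ Set.Icc (0:ℝ) 1 := by
    intro j
    exact condCDF'_mem_Icc hA1 hA2 hxt hx' j (hx' j)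
  set c : Fin d → ℕ := fun j => min (Nat.floor (ustar j * (b:ℝ)^(e j))) (b^(e j) - 1) with hcdef
  have hbox := fun j => box_coord hb (e j) (hustar_mem j)
  -- net property
  have hcount := hu.2 a k htk e c (fun j => (hbox j).1) hesum
  rw [← hcount]
  apply Finset.card_le_card
  intro n hn
  rw [Finset.mem_filter] at hn ⊢
  obtain ⟨hnIco, hnbox⟩ := hn
  refine ⟨hnIco, ?_⟩
  -- analytic part
  obtain ⟨hx_cube, hx_near⟩ := hxs n hnIco
  have hun_mem : ∀ i, u n i ∈ Set.Icc (0:ℝ) 1 := fun i => ⟨(hu.1 n i).1, (hu.1 n i).2.le⟩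
  obtain ⟨hy_cube, hy_ros⟩ := hG (xs n) hx_cube (u n) hun_mem
  set x : Fin d → ℝ := xs n with hxdef
  set y : Fin d → ℝ := G (xs n) (u n) with hydef
  rw [hmθ] at hx_near
  -- coordinate tolerance from the box
  have htol : ∀ j, |u n j - ustar j| ≤ δ * Ct / 3 := by
    intro j
    obtain ⟨hcj, hlo, hhi⟩ := hbox j
    obtain ⟨hblo, hbhi⟩ := hnbox j
    have hPj : (0:ℝ) < (b:ℝ)^(e j) := by positivity
    have h1 : |u n j - ustar j| ≤ ((b:ℝ)^(e j))⁻¹ := by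
      rw [abs_sub_le_iff]
      constructor
      · have := sub_le_sub hbhi.le hlo
        calc u n j - ustar j ≤ (((c j : ℕ):ℝ) + 1) / (b:ℝ)^(e j) - ((c j : ℕ):ℝ) / (b:ℝ)^(e j) := by
              exact this
        _ = ((b:ℝ)^(e j))⁻¹ := by rw [div_sub_div_same]; ring_nf
      · have := sub_le_sub hhi hblo
        calc ustar j - u n j ≤ (((c j : ℕ):ℝ) + 1) / (b:ℝ)^(e j) - ((c j : ℕ):ℝ) / (b:ℝ)^(e j) := by
              exact this
        _ = ((b:ℝ)^(e j))⁻¹ := by rw [div_sub_div_same]; ring_nf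
    have h2 : ((b:ℝ)^(e j))⁻¹ ≤ ((b:ℝ)^((k - t)/d))⁻¹ := by
      apply inv_anti₀ (by positivity)
      apply pow_le_pow_right₀ (by exact_mod_cast (by omega : 1 ≤ b)) (heq0 j)
    exact le_trans h1 (le_trans h2 hq0_le)
  -- main induction over coordinates
  have key : ∀ nn : ℕ, ∀ i : Fin d, (i : ℕ) ≤ nn →
      |y i - x' i| ≤ (2/3) * δ * θ ^ (d - 1 - (i : ℕ)) := by
    intro nn
    induction nn using Nat.strong_induction_on with
    | _ nn IH =>
      intro i hi
      set w : Fin d → ℝ := fun j => if (j : ℕ) < (i : ℕ) then y j else x' j with hwdef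
      have hw_cube : w ∈ cube d := by
        intro j
        rw [hwdef]
        dsimp only
        split
        · exact hy_cube j
        · exact hx' j
      have hyi : y i ∈ Set.Icc (0:ℝ) 1 := hy_cube i
      have hxi' : x' i ∈ Set.Icc (0:ℝ) 1 := hx' i
      -- step 1: lower Lipschitz bound
      have habs : Kt * |y i - x' i|
          ≤ |condCDF' κ i x w (y i) - condCDF' κ i x w (x' i)| := by
        rcases le_total (x' i) (y i) with h | h
        · have hl := condCDF'_lower hKt_pos hA1 hx_cube hw_cube i hyi hxi' h
          calc Kt * |y i - x' i| = Kt * (y i - x' i) := by rw [abs_of_nonneg (by linarith)]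
          _ ≤ condCDF' κ i x w (y i) - condCDF' κ i x w (x' i) := hl
          _ ≤ |condCDF' κ i x w (y i) - condCDF' κ i x w (x' i)| := le_abs_self _
        · have hl := condCDF'_lower hKt_pos hA1 hx_cube hw_cube i hxi' hyi h
          calc Kt * |y i - x' i| = Kt * (x' i - y i) := by
                rw [abs_of_nonpos (by linarith)]; ring
          _ ≤ condCDF' κ i x w (x' i) - condCDF' κ i x w (y i) := hl
          _ ≤ |condCDF' κ i x w (x' i) - condCDF' κ i x w (y i)| := le_abs_self _
          _ = |condCDF' κ i x w (y i) - condCDF' κ i x w (x' i)| := abs_sub_comm _ _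
      -- step 2: identify the two CDF values
      have hstep2 : condCDF' κ i x w (y i) = u n i := by
        have hcg : condCDF' κ i x w (y i) = condCDF' κ i x y (y i) := by
          apply condCDF'_congr
          intro j hj
          rw [hwdef]; simp [hj]
        rw [hcg]
        have := congrFun hy_ros i
        simpa [Ros, hydef] using this
      have hwi : w i = x' i := by rw [hwdef]; simp
      have hstep3 : condCDF' κ i x w (x' i) = Ros κ x w i := by
        simp only [Ros]
        rw [hwi]
      -- step 4: Lipschitz estimate
      have hlip2 : |ustar i - Ros κ x w i| ≤ CK * max ‖xt - x‖ ‖x' - w‖ := by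
        have h := hLip xt hxt x' hx' x hx_cube w hw_cube
        have h2 : |ustar i - Ros κ x w i| ≤ ‖Ros κ xt x' - Ros κ x w‖ := by
          have h3 := norm_le_pi_norm (Ros κ xt x' - Ros κ x w) i
          simpa [Real.norm_eq_abs, hustar] using h3
        exact le_trans h2 h
      have hIH_bound : ‖x' - w‖ ≤ (2/3) * δ * θ ^ (d - (i : ℕ)) := by
        apply (pi_norm_le_iff_of_nonneg (by positivity)).mpr
        intro j
        rw [Pi.sub_apply, Real.norm_eq_abs, hwdef]
        dsimp only
        by_cases hj : (j : ℕ) < (i : ℕ)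
        · rw [if_pos hj, abs_sub_comm]
          have hIHj := IH (j : ℕ) (lt_of_lt_of_le hj hi) j le_rfl
          calc |y j - x' j| ≤ (2/3) * δ * θ ^ (d - 1 - (j : ℕ)) := hIHj
          _ ≤ (2/3) * δ * θ ^ (d - (i : ℕ)) := by
              apply mul_le_mul_of_nonneg_left _ (by positivity)
              apply pow_le_pow_of_le_one hθ0.le hθ1
              omega
        · rw [if_neg hj]
          simp only [sub_self, abs_zero]
          positivity
      have hxt_bound : ‖xt - x‖ ≤ δ * θ ^ (d - (i : ℕ)) := by
        rw [norm_sub_rev]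
        calc ‖x - xt‖ ≤ δ * θ ^ d := hx_near
        _ ≤ δ * θ ^ (d - (i : ℕ)) := by
            apply mul_le_mul_of_nonneg_left _ hδ0.le
            apply pow_le_pow_of_le_one hθ0.le hθ1
            omega
      have hmax : max ‖xt - x‖ ‖x' - w‖ ≤ δ * θ ^ (d - (i : ℕ)) := by
        apply max_le hxt_bound
        apply le_trans hIH_bound
        have hnn : (0:ℝ) ≤ δ * θ ^ (d - (i : ℕ)) :=
          mul_nonneg hδ0.le (pow_nonneg hθ0.le _)
        linarith
      -- assemble
      have hfinal : Kt * |y i - x' i| ≤ δ * Ct / 3 + CK * (δ * θ ^ (d - (i : ℕ))) := by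
        have h1 := habs
        rw [hstep2, hstep3] at h1
        have h2 : |u n i - Ros κ x w i|
            ≤ δ * Ct / 3 + CK * (δ * θ ^ (d - (i : ℕ))) := by
          calc |u n i - Ros κ x w i| ≤ |u n i - ustar i| + |ustar i - Ros κ x w i| :=
                abs_sub_le _ _ _
          _ ≤ δ * Ct / 3 + CK * (δ * θ ^ (d - (i : ℕ))) :=
                add_le_add (htol i) (le_trans hlip2 (mul_le_mul_of_nonneg_left hmax hCK.le))
        linarith
      have hpow1 : θ ^ (d - (i : ℕ)) = θ * θ ^ (d - 1 - (i : ℕ)) := by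
        have hde : d - (i : ℕ) = (d - 1 - (i : ℕ)) + 1 := by omega
        rw [hde, pow_succ]; ring
      have hpow2 : θ ^ d ≤ θ ^ (d - 1 - (i : ℕ)) :=
        pow_le_pow_of_le_one hθ0.le hθ1 (by omega)
      have hmain : Kt * |y i - x' i| ≤ Kt * ((2/3) * δ * θ ^ (d - 1 - (i : ℕ))) := by
        have hpn : (0:ℝ) ≤ θ ^ (d - 1 - (i : ℕ)) := by positivity
        calc Kt * |y i - x' i| ≤ δ * Ct / 3 + CK * (δ * θ ^ (d - (i : ℕ))) := hfinal
        _ = Kt * (δ * θ ^ d) / 6 + δ * ((CK * θ) * θ ^ (d - 1 - (i : ℕ))) := by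
            rw [hCt_val, hpow1]; ring
        _ ≤ Kt * (δ * θ ^ (d - 1 - (i : ℕ))) / 6 + δ * ((Kt / 4) * θ ^ (d - 1 - (i : ℕ))) := by
            apply add_le_add
            · have h9 : δ * θ ^ d ≤ δ * θ ^ (d - 1 - (i : ℕ)) :=
                mul_le_mul_of_nonneg_left hpow2 hδ0.le
              have h10 := mul_le_mul_of_nonneg_left h9 hKt_pos.le
              linarith
            · apply mul_le_mul_of_nonneg_left _ hδ0.le
              exact mul_le_mul_of_nonneg_right hθCK hpn
        _ = (5/12) * (Kt * δ * θ ^ (d - 1 - (i : ℕ))) := by ring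
        _ ≤ Kt * ((2/3) * δ * θ ^ (d - 1 - (i : ℕ))) := by
            have hX : 0 ≤ Kt * δ * θ ^ (d - 1 - (i : ℕ)) :=
              mul_nonneg (mul_nonneg hKt_pos.le hδ0.le) hpn
            nlinarith [hX]
      exact le_of_mul_le_mul_left hmain hKt_pos
  -- conclusion
  have hnorm : ‖y - x'‖ ≤ δ := by
    apply (pi_norm_le_iff_of_nonneg hδ0.le).mpr
    intro i
    rw [Pi.sub_apply, Real.norm_eq_abs]
    have h1 := key (i : ℕ) i le_rfl
    have h2 : θ ^ (d - 1 - (i : ℕ)) ≤ 1 := pow_le_one₀ hθ0.le hθ1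
    have h3 := mul_le_mul_of_nonneg_left h2 (show (0:ℝ) ≤ 2/3 * δ by positivity)
    linarith
  exact ⟨hy_cube, hnorm⟩
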